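/- If the priority order π_m satisfies large burden-size priority (a π_m a' implies s(a) ≥ s(a')), then the completion Ĉ'_m satisfies substitutability: for all X' ⊆ X and contracts x, x' ∉ X', x ∈ Ĉ'_m(X' ∪ {x, x'}) implies x ∈ Ĉ'_m(X' ∪ {x}). -/

import Mathlib

/-- A contract at a fixed member state: `(asylum seeker, wait time)`.
Asylum seekers are labelled by naturals; `π a` is the priority rank of `a`
(smaller rank = higher priority); wait times are naturals. -/
abbrev Ctr := ℕ × ℕ

open Classical in
/-- Pick, from a nonempty set of contracts, the lowest-wait-time contract of the
highest-priority asylum seeker (lexicographic minimum of (rank, wait, agent)). -/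
noncomputable def pick (π : ℕ → ℕ) (Z : Finset Ctr) (h : Z.Nonempty) : Ctr :=
  let k := (Z.image fun x => toLex ((π x.1 : ℕ), toLex (x.2, x.1))).min'
    (h.image _)
  ((ofLex (ofLex k).2).2, (ofLex (ofLex k).2).1)

open Classical in
/-- One run of the greedy algorithm with fuel.  `excl = true` excludes all
contracts of already accepted asylum seekers (the rule `Ĉ_m`), `excl = false`
excludes only already accepted contracts (the completion `Ĉ'_m`). -/
noncomputable def run (s : ℕ → ℕ) (q : ℕ) (r π : ℕ → ℕ) (excl : Bool)
    (X' : Finset Ctr) : ℕ → Finset Ctr → Finset Ctr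
  | 0, acc => acc
  | n+1, acc =>
    let Z : Finset Ctr := X'.filter fun x =>
      (acc.filter fun y => y.2 = x.2).card < r x.2 ∧
      (excl = true → ∀ y ∈ acc, y.1 ≠ x.1) ∧
      (excl = false → x ∉ acc)
    if q ≤ acc.sum (fun x => s x.1) then acc
    else if h : Z.Nonempty then
      run s q r π excl X' n (insert (pick π Z h) acc)
    else acc

/-- The member state choice rule `Ĉ_m`. -/
noncomputable def Chat (s : ℕ → ℕ) (q : ℕ) (r π : ℕ → ℕ)
    (X' : Finset Ctr) : Finset Ctr :=
  run s q r π true X' (X'.card + 1) ∅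

/-- The completion `Ĉ'_m` of the member state choice rule. -/
noncomputable def Chat' (s : ℕ → ℕ) (q : ℕ) (r π : ℕ → ℕ)
    (X' : Finset Ctr) : Finset Ctr :=
  run s q r π false X' (X'.card + 1) ∅

namespace Sub10

variable (s : ℕ → ℕ) (q : ℕ) (r π : ℕ → ℕ)

/-- The sort key of a contract. -/
def key (x : Ctr) : Lex (ℕ × Lex (ℕ × ℕ)) := toLex (π x.1, toLex (x.2, x.1))

lemma key_injective : Function.Injective (key π) := by
  intro a b h
  simp only [key, toLex_inj, Prod.mk.injEq] at h
  exact Prod.ext h.2.2 h.2.1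

lemma key_lt_of_mem_of_ne {a b : Ctr} (hle : key π a ≤ key π b)
    (hne : a ≠ b) : key π a < key π b :=
  lt_of_le_of_ne hle (fun hk => hne (key_injective π hk))

lemma pick_spec (Z : Finset Ctr) (h : Z.Nonempty) :
    pick π Z h ∈ Z ∧ ∀ z ∈ Z, key π (pick π Z h) ≤ key π z := by
  have hmem : (Z.image fun x => toLex ((π x.1 : ℕ), toLex (x.2, x.1))).min' (h.image _)
      ∈ Z.image (key π) := Finset.min'_mem _ _
  rw [Finset.mem_image] at hmem
  obtain ⟨z, hz, hkz⟩ := hmem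
  have hpick : pick π Z h = z := by
    show ((ofLex (ofLex ((Z.image fun x => toLex ((π x.1 : ℕ), toLex (x.2, x.1))).min'
      (h.image _))).2).2, _) = z
    rw [← hkz]
    rfl
  have hkey : key π (pick π Z h) = (Z.image fun x => toLex ((π x.1 : ℕ), toLex (x.2, x.1))).min'
      (h.image _) := by rw [hpick, hkz]
  refine ⟨hpick ▸ hz, fun w hw => ?_⟩
  rw [hkey]
  exact Finset.min'_le _ _ (Finset.mem_image_of_mem _ hw)

open Classical in
/-- The feasible set at an accepted set `acc`. -/
noncomputable def Zset (X' acc : Finset Ctr) : Finset Ctr :=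
  X'.filter fun z => (acc.filter fun y => y.2 = z.2).card < r z.2 ∧ z ∉ acc

open Classical in
lemma mem_Zset {X' acc : Finset Ctr} {z : Ctr} :
    z ∈ Zset r X' acc ↔ z ∈ X' ∧ (acc.filter fun y => y.2 = z.2).card < r z.2 ∧ z ∉ acc := by
  simp [Zset]

lemma Zset_anti {X' acc acc' : Finset Ctr} (h : acc ⊆ acc') :
    Zset r X' acc' ⊆ Zset r X' acc := by
  intro z hz
  rw [mem_Zset] at hz ⊢
  refine ⟨hz.1, lt_of_le_of_lt (Finset.card_le_card (Finset.filter_subset_filter _ h)) hz.2.1,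
    fun hmem => hz.2.2 (h hmem)⟩

open Classical in
lemma run_false_succ (X' : Finset Ctr) (n : ℕ) (acc : Finset Ctr) :
    run s q r π false X' (n+1) acc =
      if q ≤ acc.sum (fun x => s x.1) then acc
      else if h : (Zset r X' acc).Nonempty then
        run s q r π false X' n (insert (pick π (Zset r X' acc) h) acc)
      else acc := by
  have hZ : (X'.filter fun x =>
      (acc.filter fun y => y.2 = x.2).card < r x.2 ∧
      ((false : Bool) = true → ∀ y ∈ acc, y.1 ≠ x.1) ∧
      ((false : Bool) = false → x ∉ acc)) = Zset r X' acc := by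
    apply Finset.ext
    intro z
    simp [Zset]
  have hgen : ∀ (Z1 Z2 : Finset Ctr), Z1 = Z2 →
      (if q ≤ acc.sum (fun x => s x.1) then acc
       else if h : Z1.Nonempty then run s q r π false X' n (insert (pick π Z1 h) acc) else acc) =
      (if q ≤ acc.sum (fun x => s x.1) then acc
       else if h : Z2.Nonempty then run s q r π false X' n (insert (pick π Z2 h) acc) else acc) := by
    rintro Z1 Z2 rfl; rfl
  exact hgen _ _ hZ

open Classical in
/-- Accepted-set prefix below a key threshold. -/
noncomputable def pref (R : Finset Ctr) (k : Lex (ℕ × Lex (ℕ × ℕ))) : Finset Ctr :=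
  R.filter fun z => key π z < k

/-- Capacity feasibility. -/
def capOK (A : Finset Ctr) (z : Ctr) : Prop := (A.filter fun y => y.2 = z.2).card < r z.2

/-- Quota feasibility. -/
def sumOK (A : Finset Ctr) : Prop := A.sum (fun z => s z.1) < q

lemma capOK_anti {A B : Finset Ctr} (hAB : A ⊆ B) (z : Ctr) : capOK r B z → capOK r A z :=
  fun h => lt_of_le_of_lt (Finset.card_le_card (Finset.filter_subset_filter _ hAB)) h

lemma sumOK_anti {A B : Finset Ctr} (hAB : A ⊆ B) : sumOK s q B → sumOK s q A :=
  fun h => lt_of_le_of_lt (Finset.sum_le_sum_of_subset hAB) h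


open Classical in
lemma run_spec (X' : Finset Ctr) : ∀ n acc, acc ⊆ X' → (X' \ acc).card ≤ n →
    (∀ y ∈ acc, capOK r (pref π acc (key π y)) y ∧ sumOK s q (pref π acc (key π y))) →
    (∀ y ∈ Zset r X' acc, ∀ z ∈ acc, key π z < key π y) →
    (∀ y ∈ X', y ∉ acc → y ∉ Zset r X' acc → ¬ capOK r (pref π acc (key π y)) y) →
    acc ⊆ run s q r π false X' n acc ∧
    run s q r π false X' n acc ⊆ X' ∧
    (∀ y ∈ run s q r π false X' n acc,
       capOK r (pref π (run s q r π false X' n acc) (key π y)) y ∧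
       sumOK s q (pref π (run s q r π false X' n acc) (key π y))) ∧
    (∀ y ∈ X', y ∉ run s q r π false X' n acc →
       ¬ (capOK r (pref π (run s q r π false X' n acc) (key π y)) y ∧
          sumOK s q (pref π (run s q r π false X' n acc) (key π y)))) := by
  intro n
  induction n with
  | zero =>
    intro acc hsub hcard H1 _ _
    have hXacc : X' ⊆ acc := by
      rw [← Finset.sdiff_eq_empty_iff_subset]
      exact Finset.card_eq_zero.mp (Nat.le_zero.mp hcard)
    refine ⟨Finset.Subset.refl _, hsub, H1, ?_⟩
    intro y hy hyn
    exact absurd (hXacc hy) hyn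
  | succ n ih =>
    intro acc hsub hcard H1 H2 H3
    rw [run_false_succ]
    by_cases hq : q ≤ acc.sum (fun x => s x.1)
    · rw [if_pos hq]
      refine ⟨Finset.Subset.refl _, hsub, H1, ?_⟩
      intro y hyX hyacc
      by_cases hyZ : y ∈ Zset r X' acc
      · rintro ⟨-, hs⟩
        have hpr : pref π acc (key π y) = acc :=
          Finset.filter_true_of_mem (fun z hz => H2 y hyZ z hz)
        rw [sumOK, hpr] at hs
        exact absurd hq (not_le.mpr hs)
      · exact fun hc => H3 y hyX hyacc hyZ hc.1
    · rw [if_neg hq]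
      by_cases hZne : (Zset r X' acc).Nonempty
      · rw [dif_pos hZne]
        obtain ⟨hpmem, hpmin⟩ := pick_spec π (Zset r X' acc) hZne
        set p := pick π (Zset r X' acc) hZne with hp
        obtain ⟨hpX, hpcap, hpacc⟩ := mem_Zset r |>.mp hpmem
        have hacc_lt : ∀ z ∈ acc, key π z < key π p := H2 p hpmem
        have hsub' : insert p acc ⊆ X' := Finset.insert_subset hpX hsub
        have hcard' : (X' \ insert p acc).card ≤ n := by
          rw [Finset.sdiff_insert]
          have hpmemd : p ∈ X' \ acc := Finset.mem_sdiff.mpr ⟨hpX, hpacc⟩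
          rw [Finset.card_erase_of_mem hpmemd]
          have : 1 ≤ (X' \ acc).card := Finset.card_pos.mpr ⟨p, hpmemd⟩
          omega
        have hprefeq : ∀ y ∈ acc, pref π (insert p acc) (key π y) = pref π acc (key π y) := by
          intro y hy
          rw [pref, pref, Finset.filter_insert, if_neg (asymm (hacc_lt y hy))]
        have hprefp : pref π (insert p acc) (key π p) = acc := by
          rw [pref, Finset.filter_insert, if_neg (lt_irrefl _)]
          exact Finset.filter_true_of_mem hacc_lt
        have H1' : ∀ y ∈ insert p acc,
            capOK r (pref π (insert p acc) (key π y)) y ∧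
            sumOK s q (pref π (insert p acc) (key π y)) := by
          intro y hy
          rcases Finset.mem_insert.mp hy with hy | hy
          · subst hy
            rw [hprefp]
            exact ⟨hpcap, not_le.mp hq⟩
          · rw [hprefeq y hy]
            exact H1 y hy
        have H2' : ∀ y ∈ Zset r X' (insert p acc), ∀ z ∈ insert p acc, key π z < key π y := by
          intro y hy z hz
          have hy0 : y ∈ Zset r X' acc := Zset_anti r (Finset.subset_insert p acc) hy
          have hyacc' : y ∉ insert p acc := ((mem_Zset r).mp hy).2.2
          rcases Finset.mem_insert.mp hz with hz | hz
          · subst hz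
            exact key_lt_of_mem_of_ne π (hpmin y hy0)
              (fun he => hyacc' (he ▸ Finset.mem_insert_self _ _))
          · exact H2 y hy0 z hz
        have H3' : ∀ y ∈ X', y ∉ insert p acc → y ∉ Zset r X' (insert p acc) →
            ¬ capOK r (pref π (insert p acc) (key π y)) y := by
          intro y hyX hyacc' hyZ'
          by_cases hyZ : y ∈ Zset r X' acc
          · have h1 : ∀ z ∈ insert p acc, key π z < key π y := by
              intro z hz
              rcases Finset.mem_insert.mp hz with hz | hz
              · subst hz
                exact key_lt_of_mem_of_ne π (hpmin y hyZ)
                  (fun he => hyacc' (he ▸ Finset.mem_insert_self _ _))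
              · exact H2 y hyZ z hz
            have h2 : pref π (insert p acc) (key π y) = insert p acc :=
              Finset.filter_true_of_mem h1
            rw [capOK, h2]
            intro hc
            exact hyZ' ((mem_Zset r).mpr ⟨hyX, hc, hyacc'⟩)
          · have hbase := H3 y hyX (fun hm => hyacc' (Finset.mem_insert_of_mem hm)) hyZ
            exact fun hc => hbase
              (capOK_anti r (Finset.filter_subset_filter _ (Finset.subset_insert p acc)) y hc)
        obtain ⟨ih1, ih2, ih4, ih5⟩ := ih (insert p acc) hsub' hcard' H1' H2' H3'
        exact ⟨(Finset.subset_insert p acc).trans ih1, ih2, ih4, ih5⟩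
      · rw [dif_neg hZne]
        refine ⟨Finset.Subset.refl _, hsub, H1, ?_⟩
        intro y hyX hyacc
        have hyZ : y ∉ Zset r X' acc := fun hm => hZne ⟨y, hm⟩
        exact fun hc => H3 y hyX hyacc hyZ hc.1

open Classical in
lemma chat'_spec (X' : Finset Ctr) :
    Chat' s q r π X' ⊆ X' ∧
    ∀ y ∈ X', (y ∈ Chat' s q r π X' ↔
      capOK r (pref π (Chat' s q r π X') (key π y)) y ∧
      sumOK s q (pref π (Chat' s q r π X') (key π y))) := by
  have h0 : (∅ : Finset Ctr) ⊆ X' := Finset.empty_subset _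
  have h1 : (X' \ (∅ : Finset Ctr)).card ≤ X'.card + 1 := by
    rw [Finset.sdiff_empty]; omega
  have H1 : ∀ y ∈ (∅ : Finset Ctr), capOK r (pref π ∅ (key π y)) y ∧
      sumOK s q (pref π ∅ (key π y)) := by simp
  have H2 : ∀ y ∈ Zset r X' ∅, ∀ z ∈ (∅ : Finset Ctr), key π z < key π y := by simp
  have H3 : ∀ y ∈ X', y ∉ (∅ : Finset Ctr) → y ∉ Zset r X' ∅ →
      ¬ capOK r (pref π ∅ (key π y)) y := by
    intro y hyX _ hyZ hc
    apply hyZ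
    rw [mem_Zset]
    refine ⟨hyX, ?_, Finset.notMem_empty y⟩
    simpa [capOK, pref] using hc
  obtain ⟨_, hsub, h4, h5⟩ := run_spec s q r π X' (X'.card + 1) ∅ h0 h1 H1 H2 H3
  refine ⟨hsub, fun y hy => ⟨fun hmem => h4 y hmem, fun hc => ?_⟩⟩
  by_contra hnot
  exact h5 y hy hnot hc


open Classical in
lemma caseii_cap {A B : Finset Ctr} {e x' : Ctr} (heA : e ∉ A) (hx'A : x' ∈ A)
    (hew : e.2 = x'.2) (hB : B = insert e (A.erase x')) (w : ℕ) :
    (B.filter fun z => z.2 = w).card = (A.filter fun z => z.2 = w).card := by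
  subst hB
  rw [Finset.filter_insert, Finset.filter_erase]
  by_cases hpw : e.2 = w
  · rw [if_pos hpw]
    have hx'f : x' ∈ A.filter (fun z => z.2 = w) :=
      Finset.mem_filter.mpr ⟨hx'A, hew ▸ hpw⟩
    have heF : e ∉ (A.filter fun z => z.2 = w).erase x' := fun hmem =>
      heA (Finset.mem_of_mem_filter _ (Finset.mem_of_mem_erase hmem))
    rw [Finset.card_insert_of_notMem heF, Finset.card_erase_of_mem hx'f]
    have hpos : 1 ≤ (A.filter fun z => z.2 = w).card := Finset.card_pos.mpr ⟨x', hx'f⟩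
    omega
  · rw [if_neg hpw, Finset.erase_eq_of_notMem]
    intro hmem
    exact hpw (hew.trans (Finset.mem_filter.mp hmem).2)

open Classical in
lemma caseii_sum {A B : Finset Ctr} {e x' : Ctr} (heA : e ∉ A) (hx'A : x' ∈ A)
    (hB : B = insert e (A.erase x')) (f : Ctr → ℕ) :
    B.sum f + f x' = A.sum f + f e := by
  subst hB
  rw [Finset.sum_insert (fun hmem => heA (Finset.mem_of_mem_erase hmem))]
  rw [add_assoc, Finset.sum_erase_add A f hx'A]
  exact add_comm _ _

open Classical in
lemma inv_aux (hπ : Function.Injective π) (hlarge : ∀ a a' : ℕ, π a < π a' → s a' ≤ s a)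
    (Y : Finset Ctr) (x' : Ctr) (hx'Y : x' ∉ Y) :
    ∀ (c : ℕ) (k : Lex (ℕ × Lex (ℕ × ℕ))),
    ((insert x' Y).filter fun z => key π z < k).card ≤ c →
    (pref π (Chat' s q r π Y) k = (pref π (Chat' s q r π (insert x' Y)) k).erase x' ∨
     (∃ e, e ∉ pref π (Chat' s q r π (insert x' Y)) k ∧ e ≠ x' ∧
       x' ∈ pref π (Chat' s q r π (insert x' Y)) k ∧ e.2 = x'.2 ∧ s e.1 ≤ s x'.1 ∧
       pref π (Chat' s q r π Y) k = insert e ((pref π (Chat' s q r π (insert x' Y)) k).erase x')) ∨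
     q ≤ (pref π (Chat' s q r π (insert x' Y)) k).sum (fun z => s z.1)) := by
  obtain ⟨hAsub, hAchar⟩ := chat'_spec s q r π (insert x' Y)
  obtain ⟨hBsub, hBchar⟩ := chat'_spec s q r π Y
  set A := Chat' s q r π (insert x' Y) with hA
  set B := Chat' s q r π Y with hB
  have hBsub' : B ⊆ insert x' Y := hBsub.trans (Finset.subset_insert x' Y)
  intro c
  induction c with
  | zero =>
    intro k hk
    have hfe : ((insert x' Y).filter fun z => key π z < k) = ∅ :=
      Finset.card_eq_zero.mp (Nat.le_zero.mp hk)
    have hPA : pref π A k = ∅ :=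
      Finset.subset_empty.mp (hfe ▸ Finset.filter_subset_filter _ hAsub)
    have hPB : pref π B k = ∅ :=
      Finset.subset_empty.mp (hfe ▸ Finset.filter_subset_filter _ hBsub')
    left
    rw [hPA, hPB, Finset.erase_empty]
  | succ c ihc =>
    intro k hk
    by_cases hSne : ((insert x' Y).filter fun z => key π z < k).Nonempty
    case neg =>
      have hfe : ((insert x' Y).filter fun z => key π z < k) = ∅ :=
        Finset.not_nonempty_iff_eq_empty.mp hSne
      have hPA : pref π A k = ∅ :=
        Finset.subset_empty.mp (hfe ▸ Finset.filter_subset_filter _ hAsub)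
      have hPB : pref π B k = ∅ :=
        Finset.subset_empty.mp (hfe ▸ Finset.filter_subset_filter _ hBsub')
      left
      rw [hPA, hPB, Finset.erase_empty]
    case pos =>
    obtain ⟨y, hyS, hymax⟩ :=
      Finset.exists_max_image ((insert x' Y).filter fun z => key π z < k) (key π) hSne
    have hyY' : y ∈ insert x' Y := (Finset.mem_filter.mp hyS).1
    have hyk : key π y < k := (Finset.mem_filter.mp hyS).2
    have hSprev : ((insert x' Y).filter fun z => key π z < key π y) =
        ((insert x' Y).filter fun z => key π z < k).erase y := by
      apply Finset.ext
      intro z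
      rw [Finset.mem_erase, Finset.mem_filter, Finset.mem_filter]
      constructor
      · rintro ⟨hz, hlt⟩
        exact ⟨fun he => absurd (he ▸ hlt) (lt_irrefl _), hz, hlt.trans hyk⟩
      · rintro ⟨hne, hz, hlt⟩
        exact ⟨hz, key_lt_of_mem_of_ne π (hymax z (Finset.mem_filter.mpr ⟨hz, hlt⟩)) hne⟩
    have hcard' : ((insert x' Y).filter fun z => key π z < key π y).card ≤ c := by
      rw [hSprev, Finset.card_erase_of_mem hyS]
      have hpos : 1 ≤ ((insert x' Y).filter fun z => key π z < k).card :=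
        Finset.card_pos.mpr ⟨y, hyS⟩
      omega
    have ihy := ihc (key π y) hcard'
    have hdecomp : ∀ (R : Finset Ctr), R ⊆ insert x' Y →
        pref π R k = if y ∈ R then insert y (pref π R (key π y)) else pref π R (key π y) := by
      intro R hR
      apply Finset.ext
      intro z
      rw [pref, Finset.mem_filter]
      by_cases hyR : y ∈ R
      · rw [if_pos hyR, Finset.mem_insert, pref, Finset.mem_filter]
        constructor
        · rintro ⟨hzR, hlt⟩
          by_cases hzy : z = y
          · exact Or.inl hzy
          · exact Or.inr ⟨hzR,
              key_lt_of_mem_of_ne π (hymax z (Finset.mem_filter.mpr ⟨hR hzR, hlt⟩)) hzy⟩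
        · rintro (rfl | ⟨hzR, hlt⟩)
          · exact ⟨hyR, hyk⟩
          · exact ⟨hzR, hlt.trans hyk⟩
      · rw [if_neg hyR, pref, Finset.mem_filter]
        constructor
        · rintro ⟨hzR, hlt⟩
          have hzy : z ≠ y := fun he => hyR (he ▸ hzR)
          exact ⟨hzR,
            key_lt_of_mem_of_ne π (hymax z (Finset.mem_filter.mpr ⟨hR hzR, hlt⟩)) hzy⟩
        · rintro ⟨hzR, hlt⟩
          exact ⟨hzR, hlt.trans hyk⟩
    have hdA := hdecomp A hAsub
    have hdB := hdecomp B hBsub'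
    have hyA' : y ∉ pref π A (key π y) := by
      rw [pref, Finset.mem_filter]
      rintro ⟨-, hlt⟩
      exact lt_irrefl _ hlt
    have hyB' : y ∉ pref π B (key π y) := by
      rw [pref, Finset.mem_filter]
      rintro ⟨-, hlt⟩
      exact lt_irrefl _ hlt
    have hAsubk : pref π A (key π y) ⊆ pref π A k := by
      rw [hdA]
      split_ifs
      · exact Finset.subset_insert _ _
      · exact Finset.Subset.refl _
    rcases ihy with hi | ⟨e, heA', hex, hx'A', hew, hse, hB'eq⟩ | hiii
    · -- case (i) at key y
      by_cases hyx : y = x'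
      · -- y is x' itself; B does not see it
        have hyB : y ∉ B := fun hm => hx'Y (hBsub (hyx ▸ hm))
        left
        rw [hdA, hdB, if_neg hyB]
        by_cases hyA : y ∈ A
        · rw [if_pos hyA]
          have h1 : (insert y (pref π A (key π y))).erase x' = pref π A (key π y) := by
            rw [← hyx]
            exact Finset.erase_insert hyA'
          have h2 : (pref π A (key π y)).erase x' = pref π A (key π y) := by
            rw [← hyx]
            exact Finset.erase_eq_of_notMem hyA'
          rw [h1, hi, h2]
        · rw [if_neg hyA]
          exact hi
      · have hyY : y ∈ Y := (Finset.mem_insert.mp hyY').resolve_left hyx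
        have hcharA := hAchar y hyY'
        have hcharB := hBchar y hyY
        have hBAsub : pref π B (key π y) ⊆ pref π A (key π y) := by
          rw [hi]
          exact Finset.erase_subset _ _
        by_cases hyA : y ∈ A
        · have hfeas := hcharA.mp hyA
          have hyB : y ∈ B := hcharB.mpr
            ⟨capOK_anti r hBAsub y hfeas.1, sumOK_anti s q hBAsub hfeas.2⟩
          left
          rw [hdB, if_pos hyB, hdA, if_pos hyA, Finset.erase_insert_of_ne hyx, hi]
        · by_cases hsum : sumOK s q (pref π A (key π y))
          · by_cases hyB : y ∈ B
            · -- new extra contract y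
              obtain ⟨hcapB, hsumB⟩ := hcharB.mp hyB
              have hcapA : ¬ capOK r (pref π A (key π y)) y := fun hc =>
                hyA (hcharA.mpr ⟨hc, hsum⟩)
              have hx'f : x' ∈ (pref π A (key π y)).filter (fun z => z.2 = y.2) := by
                by_contra hne
                apply hcapA
                have hfeq : (pref π A (key π y)).filter (fun z => z.2 = y.2) =
                    (pref π B (key π y)).filter (fun z => z.2 = y.2) := by
                  rw [hi, Finset.filter_erase, Finset.erase_eq_of_notMem hne]
                show ((pref π A (key π y)).filter (fun z => z.2 = y.2)).card < r y.2
                rw [hfeq]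
                exact hcapB
              obtain ⟨hx'A', hx'w⟩ := Finset.mem_filter.mp hx'f
              have hkeylt : key π x' < key π y := by
                have := hx'A'
                rw [pref, Finset.mem_filter] at this
                exact this.2
              have hs_le : s y.1 ≤ s x'.1 := by
                rw [key, key] at hkeylt
                rcases Prod.Lex.lt_iff.mp hkeylt with hlt | ⟨heq, -⟩
                · exact hlarge _ _ hlt
                · rw [hπ heq]
              right; left
              refine ⟨y, ?_, hyx, ?_, hx'w.symm, hs_le, ?_⟩
              · rw [hdA, if_neg hyA]
                exact hyA'
              · rw [hdA, if_neg hyA]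
                exact hx'A'
              · rw [hdB, if_pos hyB, hdA, if_neg hyA, hi]
            · left
              rw [hdA, if_neg hyA, hdB, if_neg hyB]
              exact hi
          · right; right
            unfold sumOK at hsum
            exact le_trans (not_lt.mp hsum) (Finset.sum_le_sum_of_subset hAsubk)
    · -- case (ii) at key y
      have hkeyx' : key π x' < key π y := by
        have := hx'A'
        rw [pref, Finset.mem_filter] at this
        exact this.2
      have hyx : y ≠ x' := by
        intro he
        rw [he] at hkeyx'
        exact lt_irrefl _ hkeyx'
      have hyY : y ∈ Y := (Finset.mem_insert.mp hyY').resolve_left hyx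
      have hcharA := hAchar y hyY'
      have hcharB := hBchar y hyY
      have heB' : e ∈ pref π B (key π y) := by
        rw [hB'eq]
        exact Finset.mem_insert_self _ _
      have heney : e ≠ y := fun he2 => hyB' (he2 ▸ heB')
      have hcapEq := caseii_cap heA' hx'A' hew hB'eq
      have hsumle : (pref π B (key π y)).sum (fun z => s z.1) ≤
          (pref π A (key π y)).sum (fun z => s z.1) := by
        have h1 := caseii_sum heA' hx'A' hB'eq (fun z => s z.1)
        have h2 : (pref π B (key π y)).sum (fun z => s z.1) + s x'.1 ≤
            (pref π A (key π y)).sum (fun z => s z.1) + s x'.1 := by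
          rw [h1]
          exact Nat.add_le_add_left hse _
        exact Nat.le_of_add_le_add_right h2
      by_cases hsum : sumOK s q (pref π A (key π y))
      · by_cases hyA : y ∈ A
        · have hfeas := hcharA.mp hyA
          have hyB : y ∈ B := by
            apply hcharB.mpr
            constructor
            · show ((pref π B (key π y)).filter (fun z => z.2 = y.2)).card < r y.2
              rw [hcapEq y.2]
              exact hfeas.1
            · show (pref π B (key π y)).sum (fun z => s z.1) < q
              exact lt_of_le_of_lt hsumle hfeas.2
          right; left
          refine ⟨e, ?_, hex, ?_, hew, hse, ?_⟩
          · rw [hdA, if_pos hyA]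
            intro hm
            rcases Finset.mem_insert.mp hm with he2 | he2
            · exact heney he2
            · exact heA' he2
          · rw [hdA, if_pos hyA]
            exact Finset.mem_insert_of_mem hx'A'
          · rw [hdB, if_pos hyB, hdA, if_pos hyA, hB'eq,
              Finset.erase_insert_of_ne hyx]
            exact Finset.insert_comm _ _ _
        · have hncapA : ¬ capOK r (pref π A (key π y)) y := fun hc =>
            hyA (hcharA.mpr ⟨hc, hsum⟩)
          have hyB : y ∉ B := by
            intro hm
            apply hncapA
            show ((pref π A (key π y)).filter (fun z => z.2 = y.2)).card < r y.2
            rw [← hcapEq y.2]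
            exact (hcharB.mp hm).1
          right; left
          refine ⟨e, ?_, hex, ?_, hew, hse, ?_⟩
          · rw [hdA, if_neg hyA]
            exact heA'
          · rw [hdA, if_neg hyA]
            exact hx'A'
          · rw [hdB, if_neg hyB, hdA, if_neg hyA]
            exact hB'eq
      · right; right
        unfold sumOK at hsum
        exact le_trans (not_lt.mp hsum) (Finset.sum_le_sum_of_subset hAsubk)
    · -- case (iii) at key y
      right; right
      exact le_trans hiii (Finset.sum_le_sum_of_subset hAsubk)

end Sub10

/-- Proposition 2(iii): under large burden-size priority
(higher priority, i.e. smaller rank, implies weakly larger burden-size), the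
completion `Ĉ'_m` is substitutable. -/
theorem chat'_substitutable_of_large (s : ℕ → ℕ) (q : ℕ) (r π : ℕ → ℕ)
    (hπ : Function.Injective π)
    (hlarge : ∀ a a' : ℕ, π a < π a' → s a' ≤ s a)
    (X' : Finset Ctr) (x x' : Ctr) (hx : x ∉ X') (hx' : x' ∉ X')
    (h : x ∈ Chat' s q r π (insert x (insert x' X'))) :
    x ∈ Chat' s q r π (insert x X') := by
  by_cases hxx : x = x'
  · rw [← hxx, Finset.insert_idem] at h
    exact h
  · have hx'Y : x' ∉ insert x X' := by
      rw [Finset.mem_insert]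
      rintro (he | hm)
      · exact hxx he.symm
      · exact hx' hm
    rw [Finset.insert_comm] at h
    obtain ⟨hAsub, hAchar⟩ := Sub10.chat'_spec s q r π (insert x' (insert x X'))
    obtain ⟨hBsub, hBchar⟩ := Sub10.chat'_spec s q r π (insert x X')
    have hxY' : x ∈ insert x' (insert x X') :=
      Finset.mem_insert_of_mem (Finset.mem_insert_self x X')
    have hfeas := (hAchar x hxY').mp h
    have hinv := Sub10.inv_aux s q r π hπ hlarge (insert x X') x' hx'Y
      (((insert x' (insert x X')).filter fun z => Sub10.key π z < Sub10.key π x).card)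
      (Sub10.key π x) le_rfl
    rcases hinv with hi | ⟨e, heA, hex, hx'A, hew, hse, hii⟩ | hiii
    · apply (hBchar x (Finset.mem_insert_self x X')).mpr
      have hsub : Sub10.pref π (Chat' s q r π (insert x X')) (Sub10.key π x) ⊆
          Sub10.pref π (Chat' s q r π (insert x' (insert x X'))) (Sub10.key π x) := by
        rw [hi]
        exact Finset.erase_subset _ _
      exact ⟨Sub10.capOK_anti r hsub x hfeas.1, Sub10.sumOK_anti s q hsub hfeas.2⟩
    · apply (hBchar x (Finset.mem_insert_self x X')).mpr
      constructor
      · show ((Sub10.pref π (Chat' s q r π (insert x X')) (Sub10.key π x)).filter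
          (fun z => z.2 = x.2)).card < r x.2
        rw [Sub10.caseii_cap heA hx'A hew hii x.2]
        exact hfeas.1
      · show (Sub10.pref π (Chat' s q r π (insert x X')) (Sub10.key π x)).sum
          (fun z => s z.1) < q
        have h1 := Sub10.caseii_sum heA hx'A hii (fun z => s z.1)
        have h2 : (Sub10.pref π (Chat' s q r π (insert x X')) (Sub10.key π x)).sum
            (fun z => s z.1) + s x'.1 ≤
            (Sub10.pref π (Chat' s q r π (insert x' (insert x X'))) (Sub10.key π x)).sum
            (fun z => s z.1) + s x'.1 := by
          rw [h1]
          exact Nat.add_le_add_left hse _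
        exact lt_of_le_of_lt (Nat.le_of_add_le_add_right h2) hfeas.2
    · exact absurd hfeas.2 (not_lt.mpr hiii)
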